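/- Let r_max ≥ 0 and let r : ℝ → ℝ be measurable with |r(a)| ≤ r_max for all a ∈ ℝ. Fix μ ∈ ℝ and define g(σ) = ∫ r(a)·φ(a; μ, σ) da for σ > 0. Then g is differentiable on (0, ∞) and for every σ > 0 one has |σ·g′(σ)| ≤ 2·r_max. -/

import Mathlib

open MeasureTheory Real

/-- Gaussian density `φ(a; μ, σ) = (2πσ²)^(−1/2) · exp(−(a−μ)²/(2σ²))`. -/
noncomputable def gpdf (μ σ a : ℝ) : ℝ :=
  (Real.sqrt (2 * Real.pi * σ ^ 2))⁻¹ * Real.exp (-((a - μ) ^ 2) / (2 * σ ^ 2))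

lemma gpdf_eq {μ s a : ℝ} (hs : 0 < s) :
    gpdf μ s a = (Real.sqrt (2*π))⁻¹ * s⁻¹ * Real.exp (-((a-μ)^2) / (2*s^2)) := by
  rw [gpdf, Real.sqrt_mul (by positivity), Real.sqrt_sq hs.le, mul_inv]

lemma gpdf_nonneg {μ s a : ℝ} : 0 ≤ gpdf μ s a := by
  rw [gpdf]; positivity

lemma integrable_sq_mul_exp {b : ℝ} (hb : 0 < b) :
    Integrable fun x : ℝ => x^2 * Real.exp (-b*x^2) := by
  have := integrable_rpow_mul_exp_neg_mul_sq hb (s := 2) (by norm_num)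
  simpa [Real.rpow_natCast (n := 2)] using this

lemma second_moment {b : ℝ} (hb : 0 < b) :
    ∫ x : ℝ, x^2 * Real.exp (-b*x^2) = Real.sqrt (π/b) / (2*b) := by
  have hderiv : ∀ x : ℝ, HasDerivAt (fun x : ℝ => x * Real.exp (-b*x^2))
      (Real.exp (-b*x^2) - 2*b*(x^2 * Real.exp (-b*x^2))) x := by
    intro x
    have h1 : HasDerivAt (fun x : ℝ => -b*x^2) (-b*(2*x)) x :=
      ((hasDerivAt_pow 2 x).const_mul (-b)).congr_deriv (by ring)
    have : HasDerivAt (fun x : ℝ => x * Real.exp (-b*x^2))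
        (1 * Real.exp (-b*x^2) + id x * (Real.exp (-b*x^2) * (-b*(2*x)))) x :=
      (hasDerivAt_id x).mul h1.exp
    convert this using 1
    simp [id]
    ring
  have hint2 : Integrable fun x : ℝ => x^2 * Real.exp (-b*x^2) := integrable_sq_mul_exp hb
  have hint0 : Integrable fun x : ℝ => Real.exp (-b*x^2) := integrable_exp_neg_mul_sq hb
  have hint1 : Integrable fun x : ℝ => x * Real.exp (-b*x^2) := integrable_mul_exp_neg_mul_sq hb
  have hz := integral_eq_zero_of_hasDerivAt_of_integrable hderiv
    (hint0.sub (hint2.const_mul (2*b))) hint1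
  rw [integral_sub hint0 (hint2.const_mul (2*b)), integral_const_mul,
    integral_gaussian] at hz
  have h2b : (2*b) ≠ 0 := by positivity
  field_simp at hz ⊢
  linarith

lemma gpdf_eq' {μ s : ℝ} (hs : 0 < s) (a : ℝ) :
    gpdf μ s a = (fun x => (Real.sqrt (2*π))⁻¹ * s⁻¹ * Real.exp (-(2*s^2)⁻¹*x^2)) (a - μ) := by
  rw [gpdf_eq hs]
  congr 1
  rw [neg_div, div_eq_inv_mul, neg_mul]

lemma integrable_gpdf {μ s : ℝ} (hs : 0 < s) : Integrable (gpdf μ s) := by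
  have hb : 0 < (2*s^2)⁻¹ := by positivity
  have : Integrable fun x : ℝ => (Real.sqrt (2*π))⁻¹ * s⁻¹ * Real.exp (-(2*s^2)⁻¹*x^2) :=
    ((integrable_exp_neg_mul_sq hb).const_mul _)
  have h2 := this.comp_sub_right μ
  exact h2.congr (by filter_upwards with a using (gpdf_eq' hs a).symm)

lemma integral_gpdf {μ s : ℝ} (hs : 0 < s) : ∫ a, gpdf μ s a = 1 := by
  have hb : 0 < (2*s^2)⁻¹ := by positivity
  simp only [gpdf_eq' hs]
  rw [integral_sub_right_eq_self (fun x => (Real.sqrt (2*π))⁻¹ * s⁻¹ * Real.exp (-(2*s^2)⁻¹*x^2)) μ,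
    integral_const_mul, integral_gaussian]
  have h1 : π / (2*s^2)⁻¹ = 2*π*s^2 := by field_simp
  rw [h1, Real.sqrt_mul (by positivity : (0:ℝ) ≤ 2*π) (s^2), Real.sqrt_sq hs.le]
  have h2 : Real.sqrt (2*π) ≠ 0 := by positivity
  field_simp

lemma integrable_sq_gpdf {μ s : ℝ} (hs : 0 < s) :
    Integrable fun a => (a-μ)^2 * gpdf μ s a := by
  have hb : 0 < (2*s^2)⁻¹ := by positivity
  have : Integrable fun x : ℝ => (Real.sqrt (2*π))⁻¹ * s⁻¹ * (x^2 * Real.exp (-(2*s^2)⁻¹*x^2)) :=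
    ((integrable_sq_mul_exp hb).const_mul _)
  have h2 := this.comp_sub_right μ
  refine h2.congr (by filter_upwards with a; rw [gpdf_eq' hs a]; ring)

lemma integral_sq_gpdf {μ s : ℝ} (hs : 0 < s) :
    ∫ a, (a-μ)^2 * gpdf μ s a = s^2 := by
  have hb : 0 < (2*s^2)⁻¹ := by positivity
  have key : ∀ a : ℝ, (a-μ)^2 * gpdf μ s a
      = (fun x => (Real.sqrt (2*π))⁻¹ * s⁻¹ * (x^2 * Real.exp (-(2*s^2)⁻¹*x^2))) (a - μ) := by
    intro a; rw [gpdf_eq' hs a]; ring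
  simp_rw [key]
  rw [integral_sub_right_eq_self
    (fun x => (Real.sqrt (2*π))⁻¹ * s⁻¹ * (x^2 * Real.exp (-(2*s^2)⁻¹*x^2))) μ,
    integral_const_mul, second_moment hb]
  have h1 : π / (2*s^2)⁻¹ = 2*π*s^2 := by field_simp
  rw [h1, Real.sqrt_mul (by positivity : (0:ℝ) ≤ 2*π) (s^2), Real.sqrt_sq hs.le]
  have h2 : Real.sqrt (2*π) ≠ 0 := by positivity
  field_simp


lemma hasDerivAt_aux (c k : ℝ) {s : ℝ} (hs : 0 < s) :
    HasDerivAt (fun t : ℝ => c * (t⁻¹ * Real.exp (-k/(2*t^2))))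
      (c * (s⁻¹ * Real.exp (-k/(2*s^2))) * (k/s^3 - 1/s)) s := by
  have hsne : s ≠ 0 := hs.ne'
  have hinv : HasDerivAt (fun t : ℝ => t⁻¹) (-(s^2)⁻¹) s := hasDerivAt_inv hsne
  have hexpo : HasDerivAt (fun t : ℝ => -k/(2*t^2)) (k/s^3) s := by
    have hsq : HasDerivAt (fun t : ℝ => t^2) (2*s) s := by
      simpa [mul_comm] using hasDerivAt_pow 2 s
    have h2 := (hsq.inv (by positivity)).const_mul (-k/2)
    have heq : (fun t : ℝ => -k/2 * (t^2)⁻¹) = (fun t : ℝ => -k/(2*t^2)) := by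
      funext t
      rw [div_eq_mul_inv, div_eq_mul_inv, mul_inv]
      ring
    simp only [Pi.inv_apply] at h2
    rw [heq] at h2
    refine h2.congr_deriv ?_
    field_simp
  have hexp : HasDerivAt (fun t : ℝ => Real.exp (-k/(2*t^2)))
      (Real.exp (-k/(2*s^2)) * (k/s^3)) s := hexpo.exp
  have hprod : HasDerivAt (fun t : ℝ => c * (t⁻¹ * Real.exp (-k/(2*t^2))))
      (c * (-(s^2)⁻¹ * Real.exp (-k/(2*s^2)) + s⁻¹ * (Real.exp (-k/(2*s^2)) * (k/s^3)))) s :=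
    (hinv.mul hexp).const_mul c
  convert hprod using 1
  field_simp
  ring

lemma gpdf_hasDerivAt {mu a s : ℝ} (hs : 0 < s) :
    HasDerivAt (fun t => gpdf mu t a) (gpdf mu s a * ((a-mu)^2/s^3 - 1/s)) s := by
  have h := hasDerivAt_aux (Real.sqrt (2*π))⁻¹ ((a-mu)^2) hs
  have heq : (fun t : ℝ => (Real.sqrt (2*π))⁻¹ * (t⁻¹ * Real.exp (-(a-mu)^2/(2*t^2))))
      =ᶠ[nhds s] (fun t => gpdf mu t a) := by
    filter_upwards [Ioi_mem_nhds hs] with t ht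
    rw [gpdf_eq ht]
    ring_nf
  refine (h.congr_of_eventuallyEq heq.symm).congr_deriv ?_
  rw [gpdf_eq hs]
  ring_nf

lemma gpdf_le {mu a s σ : ℝ} (hσ : 0 < σ) (h1 : σ/2 ≤ s) (h2 : s ≤ 2*σ) :
    gpdf mu s a ≤ (Real.sqrt (2*π*(σ/2)^2))⁻¹ * Real.exp (-((a-mu)^2) / (2*(2*σ)^2)) := by
  have hs : 0 < s := lt_of_lt_of_le (by positivity) h1
  unfold gpdf
  have e1 : (Real.sqrt (2*π*s^2))⁻¹ ≤ (Real.sqrt (2*π*(σ/2)^2))⁻¹ := by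
    gcongr
  have e2 : Real.exp (-((a-mu)^2) / (2*s^2)) ≤ Real.exp (-((a-mu)^2) / (2*(2*σ)^2)) := by
    rw [Real.exp_le_exp, neg_div, neg_div, neg_le_neg_iff]
    gcongr
  exact mul_le_mul e1 e2 (Real.exp_pos _).le (by positivity)

lemma gpdf_continuous (mu s : ℝ) : Continuous (gpdf mu s) := by
  unfold gpdf
  fun_prop

lemma key (r_max : ℝ) (r : ℝ → ℝ) (hmeas : Measurable r) (hbd : ∀ a, |r a| ≤ r_max)
    (mu : ℝ) {σ : ℝ} (hσ : 0 < σ) :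
    Integrable (fun a => r a * (gpdf mu σ a * ((a-mu)^2/σ^3 - 1/σ))) ∧
    HasDerivAt (fun s => ∫ a, r a * gpdf mu s a)
      (∫ a, r a * (gpdf mu σ a * ((a-mu)^2/σ^3 - 1/σ))) σ := by
  have hrm : 0 ≤ r_max := (abs_nonneg (r 0)).trans (hbd 0)
  have hb : (0:ℝ) < (2*(2*σ)^2)⁻¹ := by positivity
  refine hasDerivAt_integral_of_dominated_loc_of_deriv_le (s := Metric.ball σ (σ/2))
    (F := fun s a => r a * gpdf mu s a)
    (F' := fun s a => r a * (gpdf mu s a * ((a-mu)^2/s^3 - 1/s)))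
    (bound := fun a => r_max * ((Real.sqrt (2*π*(σ/2)^2))⁻¹ *
      Real.exp (-((a-mu)^2) / (2*(2*σ)^2)) * ((a-mu)^2/(σ/2)^3 + 1/(σ/2))))
    (Metric.ball_mem_nhds σ (by positivity)) ?_ ?_ ?_ ?_ ?_ ?_
  · filter_upwards with s
    exact (hmeas.mul (gpdf_continuous mu s).measurable).aestronglyMeasurable
  · refine Integrable.mono' ((integrable_gpdf (μ := mu) hσ).const_mul r_max)
      (hmeas.mul (gpdf_continuous mu σ).measurable).aestronglyMeasurable ?_
    filter_upwards with a
    rw [Real.norm_eq_abs, abs_mul, abs_of_nonneg gpdf_nonneg]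
    exact mul_le_mul_of_nonneg_right (hbd a) gpdf_nonneg
  · exact (hmeas.mul ((gpdf_continuous mu σ).measurable.mul
      (by fun_prop : Measurable fun a : ℝ => (a-mu)^2/σ^3 - 1/σ))).aestronglyMeasurable
  · filter_upwards with a s hs
    rw [Metric.mem_ball, Real.dist_eq, abs_lt] at hs
    have h1 : σ/2 ≤ s := by linarith
    have h2 : s ≤ 2*σ := by linarith
    have hs0 : 0 < s := by linarith
    rw [Real.norm_eq_abs, abs_mul, abs_mul]
    have e3 : |(a-mu)^2/s^3 - 1/s| ≤ (a-mu)^2/(σ/2)^3 + 1/(σ/2) := by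
      have i1 : (a-mu)^2/s^3 ≤ (a-mu)^2/(σ/2)^3 := by gcongr
      have i2 : 1/s ≤ 1/(σ/2) := by gcongr
      have i3 : (0:ℝ) ≤ (a-mu)^2/s^3 := by positivity
      have i4 : (0:ℝ) ≤ 1/s := by positivity
      rw [abs_le]
      constructor <;> nlinarith
    rw [abs_of_nonneg (gpdf_nonneg (μ := mu) (s := s) (a := a))]
    have hgle := gpdf_le (a := a) (mu := mu) hσ h1 h2
    have hra := hbd a
    gcongr
    exact mul_nonneg gpdf_nonneg (abs_nonneg _)
  · have hInt : Integrable (fun x : ℝ => r_max * ((Real.sqrt (2*π*(σ/2)^2))⁻¹ *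
        Real.exp (-(2*(2*σ)^2)⁻¹ * x^2) * (x^2/(σ/2)^3 + 1/(σ/2)))) := by
      have h1 := (integrable_sq_mul_exp hb).div_const ((σ/2)^3)
      have h2 := (integrable_exp_neg_mul_sq hb).div_const (σ/2)
      refine ((h1.add h2).const_mul (r_max * (Real.sqrt (2*π*(σ/2)^2))⁻¹)).congr ?_
      filter_upwards with x
      rw [Pi.add_apply]
      field_simp
    refine (hInt.comp_sub_right mu).congr ?_
    filter_upwards with a
    have : -(2*(2*σ)^2)⁻¹ * (a-mu)^2 = -((a-mu)^2) / (2*(2*σ)^2) := by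
      field_simp
    rw [this]
  · filter_upwards with a s hs
    rw [Metric.mem_ball, Real.dist_eq, abs_lt] at hs
    have hs0 : 0 < s := by linarith
    exact (gpdf_hasDerivAt hs0).const_mul (r a)

/-- for bounded measurable `r`, `g(σ) = ∫ r(a) φ(a; μ, σ) da` is
differentiable on `(0, ∞)` and `|σ·g′(σ)| ≤ 2·r_max`. -/
theorem stmt1 (r_max : ℝ) (hrmax : 0 ≤ r_max) (r : ℝ → ℝ) (hmeas : Measurable r)
    (hbd : ∀ a, |r a| ≤ r_max) (μ : ℝ) :
    (∀ σ ∈ Set.Ioi (0 : ℝ),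
      DifferentiableAt ℝ (fun σ' => ∫ a, r a * gpdf μ σ' a) σ) ∧
    (∀ σ : ℝ, 0 < σ →
      |σ * deriv (fun σ' => ∫ a, r a * gpdf μ σ' a) σ| ≤ 2 * r_max) := by
  constructor
  · intro σ hσ
    exact ((key r_max r hmeas hbd μ hσ).2).differentiableAt
  · intro σ hσ
    have hk := key r_max r hmeas hbd μ hσ
    rw [hk.2.deriv]
    set g : ℝ → ℝ := fun a => r_max * (gpdf μ σ a * ((a-μ)^2/σ^2 + 1)) with hg
    have hg_int : Integrable g := by
      have h1 : Integrable fun a : ℝ => (a-μ)^2 * gpdf μ σ a / σ^2 + gpdf μ σ a :=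
        ((integrable_sq_gpdf (μ := μ) hσ).div_const _).add (integrable_gpdf hσ)
      refine (h1.const_mul r_max).congr ?_
      filter_upwards with a
      rw [hg]
      ring
    have hle : ∀ a, ‖σ * (r a * (gpdf μ σ a * ((a-μ)^2/σ^3 - 1/σ)))‖ ≤ g a := by
      intro a
      have key1 : σ * ((a-μ)^2/σ^3 - 1/σ) = (a-μ)^2/σ^2 - 1 := by
        field_simp
      have e0 : σ * (r a * (gpdf μ σ a * ((a-μ)^2/σ^3 - 1/σ)))
          = r a * (gpdf μ σ a * (σ * ((a-μ)^2/σ^3 - 1/σ))) := by ring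
      rw [Real.norm_eq_abs, e0, key1, abs_mul, abs_mul,
        abs_of_nonneg (gpdf_nonneg (μ := μ) (s := σ) (a := a))]
      have e1 : |(a-μ)^2/σ^2 - 1| ≤ (a-μ)^2/σ^2 + 1 := by
        have h2 : (0:ℝ) ≤ (a-μ)^2/σ^2 := by positivity
        rw [abs_le]
        constructor <;> linarith
      have hra := hbd a
      show _ ≤ r_max * (gpdf μ σ a * ((a-μ)^2/σ^2 + 1))
      gcongr
      · exact mul_nonneg gpdf_nonneg (abs_nonneg _)
      · exact gpdf_nonneg
    have hgval : ∫ a, g a = 2 * r_max := by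
      have expand : g = fun a : ℝ =>
          r_max/σ^2 * ((a-μ)^2 * gpdf μ σ a) + r_max * gpdf μ σ a := by
        funext a
        rw [hg]
        ring
      rw [expand, integral_add (((integrable_sq_gpdf (μ := μ) hσ).const_mul _))
        ((integrable_gpdf hσ).const_mul _), integral_const_mul, integral_const_mul,
        integral_sq_gpdf hσ, integral_gpdf hσ]
      field_simp
      ring
    calc |σ * ∫ a, r a * (gpdf μ σ a * ((a-μ)^2/σ^3 - 1/σ))|
        = ‖∫ a, σ * (r a * (gpdf μ σ a * ((a-μ)^2/σ^3 - 1/σ)))‖ := by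
          rw [integral_const_mul, Real.norm_eq_abs]
      _ ≤ ∫ a, g a := norm_integral_le_of_norm_le hg_int
          (Filter.Eventually.of_forall hle)
      _ = 2 * r_max := hgval
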